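/- arXiv:1507.00431 — 2 statements merged into one kernel-verified Lean document; each statement's English description precedes it below -/
import Mathlib

section
/- (Low-gain limit of power sharing: proportional sharing) Let B be the susceptance matrix of a connected weighted graph partitioned into loads and inverters, and K_I diagonal with strictly negative entries K_1,…,K_m. For ε > 0 define B_{red,ε} := B_LL − B_LI(B_II + εK_I)^{−1}B_IL and S_ε := εK_I(B_II + εK_I)^{−1}B_IL B_{red,ε}^{−1} (all inverses exist for ε > 0). Then as ε → 0⁺, S_ε converges to −(∑_{i=1}^m K_i)^{−1} K_I 1_{m×n}, i.e., entrywise (S_ε)_{ij} → −K_i / ∑_{k=1}^m K_k for every i, j; in particular each row limit is independent of the network topology and of the column index, so the limiting injections Q_I = (lim S_ε)Q_L are proportional to the gains K_i and to the total load ∑_j Q_{L,j}. -/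
open Matrix Finset

set_option linter.unusedSectionVars false

def suscGraph {V : Type*} (B : Matrix V V ℝ) : SimpleGraph V where
  Adj i j := i ≠ j ∧ 0 < B i j ∧ 0 < B j i
  symm := ⟨fun _ _ h => ⟨h.1.symm, h.2.2, h.2.1⟩⟩
  loopless := ⟨fun _ h => h.1 rfl⟩

def IsSusceptance {V : Type*} [Fintype V] [DecidableEq V] (B : Matrix V V ℝ) : Prop :=
  B.IsSymm ∧ (∀ i j, i ≠ j → 0 ≤ B i j) ∧
    (∀ i, B i i = -∑ j ∈ Finset.univ.erase i, B i j) ∧ (suscGraph B).Connected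

section Quad
variable {V : Type*} [Fintype V] [DecidableEq V]

lemma quad_identity (B : Matrix V V ℝ) (hsym : ∀ i j, B i j = B j i)
    (hrow : ∀ i, ∑ j, B i j = 0) (v : V → ℝ) :
    v ⬝ᵥ B *ᵥ v = -(1/2) * ∑ p, ∑ q, B p q * (v p - v q)^2 := by
  have expand : ∀ p, ∑ q, B p q * (v p - v q)^2
      = (∑ q, B p q) * v p ^2 - 2 * ∑ q, B p q * (v p * v q) + ∑ q, B p q * v q ^2 := by
    intro p
    rw [Finset.sum_mul, Finset.mul_sum]
    rw [← Finset.sum_sub_distrib, ← Finset.sum_add_distrib]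
    exact Finset.sum_congr rfl fun q _ => by ring
  have h3 : ∑ p, ∑ q, B p q * v q ^2 = 0 := by
    rw [Finset.sum_comm]
    refine Finset.sum_eq_zero fun q _ => ?_
    have : ∑ p, B p q = 0 := by
      rw [show (∑ p, B p q) = ∑ p, B q p from Finset.sum_congr rfl fun p _ => (hsym p q)]
      exact hrow q
    rw [← Finset.sum_mul, this, zero_mul]
  have hL : v ⬝ᵥ B *ᵥ v = ∑ p, ∑ q, B p q * (v p * v q) := by
    simp only [dotProduct, mulVec, dotProduct, Finset.mul_sum]
    exact Finset.sum_congr rfl fun p _ => Finset.sum_congr rfl fun q _ => by ring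
  have h2 : ∑ p, 2 * (∑ q, B p q * (v p * v q)) = 2 * ∑ p, ∑ q, B p q * (v p * v q) :=
    (Finset.mul_sum _ _ _).symm
  simp only [expand, hrow, zero_mul]
  rw [Finset.sum_add_distrib, Finset.sum_sub_distrib, h3, add_zero, h2, hL]
  rw [Finset.sum_const]
  ring

lemma susc_rowsum {B : Matrix V V ℝ} (hB : IsSusceptance B) (i : V) : ∑ j, B i j = 0 := by
  rw [← Finset.add_sum_erase _ _ (Finset.mem_univ i), hB.2.2.1 i, neg_add_cancel]

lemma susc_symm {B : Matrix V V ℝ} (hB : IsSusceptance B) (i j : V) : B i j = B j i :=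
  congrFun (congrFun hB.1.symm j) i |>.symm

lemma quad_term_nonneg {B : Matrix V V ℝ} (hB : IsSusceptance B) (v : V → ℝ) (p q : V) :
    0 ≤ B p q * (v p - v q)^2 := by
  rcases eq_or_ne p q with rfl | h
  · simp
  · exact mul_nonneg (hB.2.1 p q h) (sq_nonneg _)

lemma quad_nonpos {B : Matrix V V ℝ} (hB : IsSusceptance B) (v : V → ℝ) :
    v ⬝ᵥ B *ᵥ v ≤ 0 := by
  rw [quad_identity B (susc_symm hB) (susc_rowsum hB) v]
  have : 0 ≤ ∑ p, ∑ q, B p q * (v p - v q)^2 :=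
    Finset.sum_nonneg fun p _ => Finset.sum_nonneg fun q _ => quad_term_nonneg hB v p q
  nlinarith

/-- if the quadratic form vanishes, v is constant on the graph, hence constant. -/
lemma const_of_quad_zero {B : Matrix V V ℝ} (hB : IsSusceptance B) (v : V → ℝ)
    (hq : v ⬝ᵥ B *ᵥ v = 0) : ∀ p q, v p = v q := by
  have hid := quad_identity B (susc_symm hB) (susc_rowsum hB) v
  rw [hq] at hid
  have hsum : ∑ p, ∑ q, B p q * (v p - v q)^2 = 0 := by linarith
  have hterm : ∀ p q, B p q * (v p - v q)^2 = 0 := by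
    intro p q
    have h1 := (Finset.sum_eq_zero_iff_of_nonneg
      (fun p _ => Finset.sum_nonneg fun q _ => quad_term_nonneg hB v p q)).mp hsum p
      (Finset.mem_univ p)
    exact (Finset.sum_eq_zero_iff_of_nonneg
      (fun q _ => quad_term_nonneg hB v p q)).mp h1 q (Finset.mem_univ q)
  have hadj : ∀ p q, (suscGraph B).Adj p q → v p = v q := by
    intro p q h
    have := hterm p q
    have hBpq : B p q ≠ 0 := ne_of_gt h.2.1
    have : (v p - v q)^2 = 0 := by
      rcases mul_eq_zero.mp this with h' | h'
      · exact absurd h' hBpq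
      · exact h'
    have := pow_eq_zero_iff (n := 2) (by norm_num) |>.mp this
    linarith
  intro p q
  obtain ⟨w⟩ := hB.2.2.2.preconnected p q
  induction w with
  | nil => rfl
  | cons h p' ih => exact (hadj _ _ h).trans ih

lemma const_of_mulVec_zero {B : Matrix V V ℝ} (hB : IsSusceptance B) (v : V → ℝ)
    (hv : B *ᵥ v = 0) : ∀ p q, v p = v q := by
  refine const_of_quad_zero hB v ?_
  rw [hv, dotProduct_zero]

end Quad


section DetPart
variable {n m : ℕ} (B : Matrix (Fin n ⊕ Fin m) (Fin n ⊕ Fin m) ℝ) (k : Fin m → ℝ)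

lemma quadD (x : (Fin n ⊕ Fin m) → ℝ) :
    x ⬝ᵥ (fromBlocks 0 0 0 (Matrix.diagonal k) : Matrix (Fin n ⊕ Fin m) (Fin n ⊕ Fin m) ℝ) *ᵥ x
      = ∑ i, k i * (x (Sum.inr i))^2 := by
  simp only [dotProduct, mulVec, dotProduct, Fintype.sum_sum_type, fromBlocks_apply₁₁,
    fromBlocks_apply₁₂, fromBlocks_apply₂₁, fromBlocks_apply₂₂, Matrix.zero_apply, zero_mul,
    Finset.sum_const_zero, add_zero, zero_add, mul_zero]
  refine Finset.sum_congr rfl fun i _ => ?_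
  rw [Finset.sum_eq_single i (fun j _ hji => by simp [Matrix.diagonal_apply_ne' _ hji])
    (fun h => absurd (Finset.mem_univ i) h)]
  simp [Matrix.diagonal_apply_eq]
  ring

lemma quad22 (y : Fin m → ℝ) :
    (Sum.elim 0 y) ⬝ᵥ B *ᵥ (Sum.elim 0 y) = y ⬝ᵥ (B.toBlocks₂₂) *ᵥ y := by
  simp only [dotProduct, mulVec, dotProduct, Fintype.sum_sum_type, Sum.elim_inl, Sum.elim_inr,
    Pi.zero_apply, zero_mul, mul_zero, Finset.sum_const_zero, add_zero, zero_add, toBlocks₂₂,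
    of_apply]

lemma quadK (ε : ℝ) (y : Fin m → ℝ) :
    y ⬝ᵥ (ε • Matrix.diagonal k) *ᵥ y = ε * ∑ i, k i * (y i)^2 := by
  simp only [dotProduct, mulVec, dotProduct, Matrix.smul_apply, smul_eq_mul, Finset.mul_sum]
  refine Finset.sum_congr rfl fun i _ => ?_
  rw [Finset.sum_eq_single i (fun j _ hji => by simp [Matrix.diagonal_apply_ne' _ hji])
    (fun h => absurd (Finset.mem_univ i) h)]
  simp [Matrix.diagonal_apply_eq]
  ring

lemma sumK_neg (hk : ∀ i, k i < 0) (y : Fin m → ℝ) (hy : y ≠ 0) :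
    ∑ i, k i * (y i)^2 < 0 := by
  obtain ⟨i0, hi0⟩ : ∃ i, y i ≠ 0 := by
    by_contra h
    push_neg at h
    exact hy (funext h)
  have h := Finset.sum_lt_sum (s := Finset.univ) (f := fun i => k i * (y i)^2)
    (g := fun _ => (0:ℝ))
    (fun i _ => mul_nonpos_of_nonpos_of_nonneg (le_of_lt (hk i)) (sq_nonneg _))
    ⟨i0, Finset.mem_univ i0, mul_neg_of_neg_of_pos (hk i0) (by positivity)⟩
  simpa using h


lemma det22_ne {B : Matrix (Fin n ⊕ Fin m) (Fin n ⊕ Fin m) ℝ} {k : Fin m → ℝ}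
    (hB : IsSusceptance B) (hk : ∀ i, k i < 0) {ε : ℝ} (hε : 0 < ε) :
    (B.toBlocks₂₂ + ε • Matrix.diagonal k).det ≠ 0 := by
  intro hdet
  obtain ⟨y, hy, hvec⟩ := (Matrix.exists_mulVec_eq_zero_iff).mpr hdet
  have h0 : y ⬝ᵥ (B.toBlocks₂₂ + ε • Matrix.diagonal k) *ᵥ y = 0 := by
    rw [hvec, dotProduct_zero]
  rw [Matrix.add_mulVec, dotProduct_add, quadK] at h0
  have h1 : y ⬝ᵥ B.toBlocks₂₂ *ᵥ y ≤ 0 := by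
    rw [← quad22]
    exact quad_nonpos hB _
  have h2 : ε * ∑ i, k i * (y i)^2 < 0 :=
    mul_neg_of_pos_of_neg hε (sumK_neg k hk y hy)
  linarith

lemma detM_ne {B : Matrix (Fin n ⊕ Fin m) (Fin n ⊕ Fin m) ℝ} {k : Fin m → ℝ}
    (hm : 0 < m) (hB : IsSusceptance B) (hk : ∀ i, k i < 0) {ε : ℝ} (hε : 0 < ε) :
    (B + ε • (fromBlocks 0 0 0 (Matrix.diagonal k)
      : Matrix (Fin n ⊕ Fin m) (Fin n ⊕ Fin m) ℝ)).det ≠ 0 := by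
  intro hdet
  obtain ⟨x, hx, hvec⟩ := (Matrix.exists_mulVec_eq_zero_iff).mpr hdet
  have h0 : x ⬝ᵥ (B + ε • (fromBlocks 0 0 0 (Matrix.diagonal k)
      : Matrix (Fin n ⊕ Fin m) (Fin n ⊕ Fin m) ℝ)) *ᵥ x = 0 := by
    rw [hvec, dotProduct_zero]
  rw [Matrix.add_mulVec, dotProduct_add, Matrix.smul_mulVec, dotProduct_smul,
    quadD, smul_eq_mul] at h0
  have h1 : x ⬝ᵥ B *ᵥ x ≤ 0 := quad_nonpos hB x
  set y : Fin m → ℝ := fun i => x (Sum.inr i) with hy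
  rcases eq_or_ne y 0 with hy0 | hy0
  · have hsum : ∑ i, k i * (x (Sum.inr i))^2 = 0 := by
      refine Finset.sum_eq_zero fun i _ => ?_
      have : x (Sum.inr i) = 0 := congrFun hy0 i
      rw [this]; ring
    rw [hsum, mul_zero, add_zero] at h0
    have hconst := const_of_quad_zero hB x h0
    have i0 : Fin m := ⟨0, hm⟩
    apply hx
    funext p
    have : x p = x (Sum.inr ⟨0, hm⟩) := hconst p _
    rw [this]
    exact congrFun hy0 ⟨0, hm⟩
  · have h2 : ε * ∑ i, k i * (x (Sum.inr i))^2 < 0 :=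
      mul_neg_of_pos_of_neg hε (sumK_neg k hk y hy0)
    linarith

lemma detMinor_ne {B : Matrix (Fin n ⊕ Fin m) (Fin n ⊕ Fin m) ℝ}
    (hm : 0 < m) (hB : IsSusceptance B) :
    ((B.updateRow (Sum.inr ⟨0, hm⟩) (Pi.single (Sum.inr ⟨0, hm⟩) 1)).updateCol
      (Sum.inr ⟨0, hm⟩) (Pi.single (Sum.inr ⟨0, hm⟩) 1)).det ≠ 0 := by
  set i0 : Fin n ⊕ Fin m := Sum.inr ⟨0, hm⟩ with hi0
  set C' := ((B.updateRow i0 (Pi.single i0 1)).updateCol i0 (Pi.single i0 1)) with hC'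
  have hentry : ∀ a b, C' a b = if b = i0 then (if a = i0 then (1:ℝ) else 0)
      else (if a = i0 then 0 else B a b) := by
    intro a b
    simp only [hC', Matrix.updateCol_apply, Matrix.updateRow_apply, Pi.single_apply]
    rcases eq_or_ne b i0 with rfl | hb <;> rcases eq_or_ne a i0 with rfl | ha <;> simp [*, -hi0]
  intro hdet
  obtain ⟨v, hv, hvec⟩ := (Matrix.exists_mulVec_eq_zero_iff).mpr hdet
  have hvi0 : v i0 = 0 := by
    have h := congrFun hvec i0
    simp only [mulVec, dotProduct, Pi.zero_apply] at h
    rwa [Finset.sum_eq_single i0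
      (fun b _ hb => by rw [hentry, if_neg hb, if_pos rfl, zero_mul])
      (fun hni => absurd (Finset.mem_univ i0) hni), hentry, if_pos rfl, if_pos rfl, one_mul] at h
  have hBr : ∀ r, r ≠ i0 → (B *ᵥ v) r = 0 := by
    intro r hr
    have h := congrFun hvec r
    simp only [mulVec, dotProduct, Pi.zero_apply, hentry, if_neg hr] at h ⊢
    rw [show ∑ b, (if b = i0 then (0:ℝ) else B r b) * v b = ∑ b, B r b * v b from
      Finset.sum_congr rfl fun b _ => by
        rcases eq_or_ne b i0 with rfl | hb
        · simp [hvi0]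
        · simp [hb]] at h
    exact h
  have hquad : v ⬝ᵥ B *ᵥ v = 0 := by
    simp only [dotProduct]
    refine Finset.sum_eq_zero fun r _ => ?_
    rcases eq_or_ne r i0 with rfl | hr
    · rw [hvi0, zero_mul]
    · rw [hBr r hr, mul_zero]
  have hconst := const_of_quad_zero hB v hquad
  apply hv
  funext p
  rw [show v p = v i0 from hconst p i0, hvi0]
  rfl

lemma adj_structure {B : Matrix (Fin n ⊕ Fin m) (Fin n ⊕ Fin m) ℝ}
    (hm : 0 < m) (hB : IsSusceptance B) :
    ∃ α : ℝ, α ≠ 0 ∧ ∀ i j, B.adjugate i j = α := by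
  haveI : Nonempty (Fin n ⊕ Fin m) := ⟨Sum.inr ⟨0, hm⟩⟩
  set i0 : Fin n ⊕ Fin m := Sum.inr ⟨0, hm⟩ with hi0
  have hdetB : B.det = 0 := by
    rw [← Matrix.exists_mulVec_eq_zero_iff]
    refine ⟨fun _ => 1, ?_, ?_⟩
    · intro h
      exact one_ne_zero (congrFun h i0)
    · funext r
      simp only [mulVec, dotProduct, mul_one, Pi.zero_apply]
      exact susc_rowsum hB r
  have hMul : B * B.adjugate = 0 := by rw [Matrix.mul_adjugate, hdetB, zero_smul]
  have hMul2 : B.adjugate * B = 0 := by rw [Matrix.adjugate_mul, hdetB, zero_smul]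
  have hcol : ∀ (j i i' : Fin n ⊕ Fin m), B.adjugate i j = B.adjugate i' j := by
    intro j i i'
    have : B *ᵥ (fun i => B.adjugate i j) = 0 := by
      funext r
      simpa [mulVec, dotProduct, Matrix.mul_apply] using congrFun (congrFun hMul r) j
    exact const_of_mulVec_zero hB _ this i i'
  have hrow : ∀ (i j j' : Fin n ⊕ Fin m), B.adjugate i j = B.adjugate i j' := by
    intro i j j'
    have : B *ᵥ (fun j => B.adjugate i j) = 0 := by
      funext r
      have h := congrFun (congrFun hMul2 i) r
      simp only [Matrix.mul_apply, Matrix.zero_apply] at h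
      simp only [mulVec, dotProduct, Pi.zero_apply]
      rw [show ∑ j, B r j * B.adjugate i j = ∑ j, B.adjugate i j * B j r from
        Finset.sum_congr rfl fun j _ => by rw [susc_symm hB r j]; ring]
      exact h
    exact const_of_mulVec_zero hB _ this j j'
  refine ⟨B.adjugate i0 i0, ?_, fun i j => (hcol j i i0).trans (hrow i0 j i0)⟩
  rw [Matrix.adjugate_apply]
  set C := B.updateRow i0 (Pi.single i0 1) with hC
  have hsplit : C = C.updateCol i0
      (Pi.single i0 1 + fun r => if r = i0 then 0 else B r i0) := by
    rw [show (Pi.single i0 1 + fun r => if r = i0 then (0:ℝ) else B r i0)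
        = fun r => C r i0 from ?_, Matrix.updateCol_eq_self]
    funext r
    simp only [Pi.add_apply, Pi.single_apply, hC, Matrix.updateRow_apply]
    rcases eq_or_ne r i0 with rfl | hr <;> simp [*, -hi0]
  rw [hsplit, Matrix.det_updateCol_add]
  have hzero : (C.updateCol i0 fun r => if r = i0 then (0:ℝ) else B r i0).det = 0 := by
    refine Matrix.det_eq_zero_of_row_eq_zero i0 fun j => ?_
    rcases eq_or_ne j i0 with rfl | hj
    · rw [Matrix.updateCol_self, if_pos rfl]
    · rw [Matrix.updateCol_ne hj, hC, Matrix.updateRow_self, Pi.single_apply, if_neg hj]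
  rw [hzero, add_zero]
  exact detMinor_ne hm hB

end DetPart

section Deriv
variable {V : Type*} [Fintype V] [DecidableEq V]

lemma hasDerivAt_det_add_smul (A D : Matrix V V ℝ) :
    HasDerivAt (fun ε : ℝ => (A + ε • D).det)
      (∑ j, (A.updateCol j (fun i => D i j)).det) 0 := by
  have hfun : (fun ε : ℝ => (A + ε • D).det)
      = fun ε : ℝ => ∑ σ : Equiv.Perm V, ((Equiv.Perm.sign σ : ℤ) : ℝ) *
          ∏ i, (A (σ i) i + ε * D (σ i) i) := by
    funext ε
    rw [Matrix.det_apply']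
    simp only [Matrix.add_apply, Matrix.smul_apply, smul_eq_mul]
  have key : HasDerivAt (fun ε : ℝ => ∑ σ : Equiv.Perm V, ((Equiv.Perm.sign σ : ℤ) : ℝ) *
        ∏ i, (A (σ i) i + ε * D (σ i) i))
      (∑ σ : Equiv.Perm V, ((Equiv.Perm.sign σ : ℤ) : ℝ) *
        ∑ j, (∏ i ∈ Finset.univ.erase j, A (σ i) i) * D (σ j) j) 0 := by
    refine HasDerivAt.fun_sum fun σ _ => ?_
    have hp := HasDerivAt.fun_finsetProd (u := Finset.univ)
      (f := fun i (ε : ℝ) => A (σ i) i + ε * D (σ i) i) (f' := fun i => D (σ i) i) (x := 0)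
      (fun i _ => (hasDerivAt_mul_const (D (σ i) i)).const_add (A (σ i) i))
    simp only [zero_mul, add_zero, smul_eq_mul] at hp
    have h2 := hp.const_mul (((Equiv.Perm.sign σ : ℤ) : ℝ))
    exact h2
  rw [hfun]
  have hdet : ∀ j : V, (A.updateCol j (fun i => D i j)).det
      = ∑ σ : Equiv.Perm V, ((Equiv.Perm.sign σ : ℤ) : ℝ) *
          (D (σ j) j * ∏ i ∈ Finset.univ.erase j, A (σ i) i) := by
    intro j
    rw [Matrix.det_apply']
    refine Finset.sum_congr rfl fun σ _ => ?_
    rw [← Finset.mul_prod_erase Finset.univ _ (Finset.mem_univ j)]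
    rw [Matrix.updateCol_self]
    rw [Finset.prod_congr rfl fun i hi =>
      Matrix.updateCol_ne (M := A) (Finset.ne_of_mem_erase hi)]
  have hval : (∑ σ : Equiv.Perm V, ((Equiv.Perm.sign σ : ℤ) : ℝ) *
        ∑ j, (∏ i ∈ Finset.univ.erase j, A (σ i) i) * D (σ j) j)
      = ∑ j, (A.updateCol j (fun i => D i j)).det := by
    simp only [Finset.mul_sum]
    rw [Finset.sum_comm]
    refine Finset.sum_congr rfl fun j _ => ?_
    rw [hdet j]
    exact Finset.sum_congr rfl fun σ _ => by ring
  rw [← hval]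
  exact key
end Deriv

section C1
variable {n m : ℕ}

lemma c1_value (B : Matrix (Fin n ⊕ Fin m) (Fin n ⊕ Fin m) ℝ) (k : Fin m → ℝ) (α : ℝ)
    (hαeq : ∀ i j, B.adjugate i j = α) :
    ∑ j, (B.updateCol j (fun i =>
        (fromBlocks 0 0 0 (Matrix.diagonal k) :
          Matrix (Fin n ⊕ Fin m) (Fin n ⊕ Fin m) ℝ) i j)).det = α * ∑ l, k l := by
  set D : Matrix (Fin n ⊕ Fin m) (Fin n ⊕ Fin m) ℝ := fromBlocks 0 0 0 (Matrix.diagonal k)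
    with hD
  have step : ∀ j, (B.updateCol j (fun i => D i j)).det = ∑ i, α * D i j := by
    intro j
    rw [← Matrix.cramer_apply, Matrix.cramer_eq_adjugate_mulVec]
    simp only [mulVec, dotProduct]
    exact Finset.sum_congr rfl fun i _ => by rw [hαeq j i]
  simp only [step]
  rw [show (∑ x, ∑ i, α * D i x) = α * ∑ x, ∑ i, D i x by
    rw [Finset.mul_sum]
    exact Finset.sum_congr rfl fun x _ => (Finset.mul_sum _ _ _).symm]
  congr 1
  rw [Finset.sum_comm]
  simp only [hD, Fintype.sum_sum_type, fromBlocks_apply₁₁, fromBlocks_apply₁₂,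
    fromBlocks_apply₂₁, fromBlocks_apply₂₂, Matrix.zero_apply, Finset.sum_const_zero,
    add_zero, zero_add]
  refine Finset.sum_congr rfl fun i _ => ?_
  rw [Finset.sum_eq_single i (fun j _ hji => Matrix.diagonal_apply_ne' _ hji)
    (fun h => absurd (Finset.mem_univ i) h), Matrix.diagonal_apply_eq]
end C1


/-- Low-gain limit of power sharing: proportional sharing: all the
inverses defining `S_ε = ε K_I (B_II + ε K_I)⁻¹ B_IL B_{red,ε}⁻¹` exist for
`ε > 0`, and as `ε → 0⁺` the matrix `S_ε` converges to the matrix with entries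
`-K_i / Σ_l K_l`, i.e. to `-(Σ_i K_i)⁻¹ K_I 1_{m×n}`; in particular the limit is
independent of the network topology and of the column index. -/
theorem power_sharing_low_gain_limit {n m : ℕ} (hn : 0 < n) (hm : 0 < m)
    (B : Matrix (Fin n ⊕ Fin m) (Fin n ⊕ Fin m) ℝ) (hB : IsSusceptance B)
    (k : Fin m → ℝ) (hk : ∀ i, k i < 0) :
    (∀ ε : ℝ, 0 < ε →
      IsUnit (B.toBlocks₂₂ + ε • Matrix.diagonal k).det ∧
      IsUnit (B.toBlocks₁₁ -
        B.toBlocks₁₂ * (B.toBlocks₂₂ + ε • Matrix.diagonal k)⁻¹ *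
          B.toBlocks₂₁).det) ∧
    Filter.Tendsto
      (fun ε : ℝ =>
        (ε • Matrix.diagonal k) * (B.toBlocks₂₂ + ε • Matrix.diagonal k)⁻¹ *
          B.toBlocks₂₁ *
          (B.toBlocks₁₁ -
            B.toBlocks₁₂ * (B.toBlocks₂₂ + ε • Matrix.diagonal k)⁻¹ *
              B.toBlocks₂₁)⁻¹)
      (nhdsWithin 0 (Set.Ioi 0))
      (nhds (Matrix.of fun (i : Fin m) (_ : Fin n) => -k i / ∑ l, k l)) := by
  classical
  set K : Matrix (Fin m) (Fin m) ℝ := Matrix.diagonal k with hK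
  set D : Matrix (Fin n ⊕ Fin m) (Fin n ⊕ Fin m) ℝ := fromBlocks 0 0 0 K with hD
  have hMblocks : ∀ ε : ℝ, B + ε • D
      = fromBlocks B.toBlocks₁₁ B.toBlocks₁₂ B.toBlocks₂₁ (B.toBlocks₂₂ + ε • K) := by
    intro ε
    conv_lhs => rw [← Matrix.fromBlocks_toBlocks B]
    rw [hD, Matrix.fromBlocks_smul, Matrix.fromBlocks_add]
    simp
  have hdetM : ∀ ε : ℝ, 0 < ε → (B + ε • D).det ≠ 0 := fun ε hε => detM_ne hm hB hk hε
  have h22 : ∀ ε : ℝ, 0 < ε → IsUnit (B.toBlocks₂₂ + ε • K).det :=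
    fun ε hε => isUnit_iff_ne_zero.mpr (det22_ne hB hk hε)
  have hSchur : ∀ ε : ℝ, 0 < ε → IsUnit (B.toBlocks₁₁ - B.toBlocks₁₂ *
      (B.toBlocks₂₂ + ε • K)⁻¹ * B.toBlocks₂₁).det := by
    intro ε hε
    letI := Matrix.invertibleOfIsUnitDet _ (h22 ε hε)
    have hinvOf : ⅟(B.toBlocks₂₂ + ε • K) = (B.toBlocks₂₂ + ε • K)⁻¹ :=
      Matrix.invOf_eq_nonsing_inv _
    have hdet := Matrix.det_fromBlocks₂₂ B.toBlocks₁₁ B.toBlocks₁₂ B.toBlocks₂₁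
      (B.toBlocks₂₂ + ε • K)
    rw [hinvOf, ← hMblocks ε] at hdet
    have hne := hdetM ε hε
    rw [hdet] at hne
    exact isUnit_iff_ne_zero.mpr (right_ne_zero_of_mul hne)
  refine ⟨fun ε hε => ⟨h22 ε hε, hSchur ε hε⟩, ?_⟩
  obtain ⟨α, hα0, hαeq⟩ := adj_structure hm hB
  have hsumk : ∑ l, k l < 0 := by
    have h := sumK_neg k hk (fun _ => 1) (fun h => one_ne_zero (congrFun h ⟨0, hm⟩))
    simpa using h
  have hc1ne : α * ∑ l, k l ≠ 0 := mul_ne_zero hα0 (ne_of_lt hsumk)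
  have hdetB : B.det = 0 := by
    rw [← Matrix.exists_mulVec_eq_zero_iff]
    refine ⟨fun _ => 1, fun h => one_ne_zero (congrFun h (Sum.inr ⟨0, hm⟩)), ?_⟩
    funext r
    simp only [mulVec, dotProduct, mul_one, Pi.zero_apply]
    exact susc_rowsum hB r
  have hderiv := hasDerivAt_det_add_smul B D
  rw [c1_value B k α hαeq] at hderiv
  have hslope := hasDerivAt_iff_tendsto_slope.mp hderiv
  have hmono : nhdsWithin (0:ℝ) (Set.Ioi 0) ≤ nhdsWithin (0:ℝ) {(0:ℝ)}ᶜ :=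
    nhdsWithin_mono 0 (fun x hx => ne_of_gt hx)
  have hratio : Filter.Tendsto (fun ε : ℝ => (B + ε • D).det / ε)
      (nhdsWithin 0 (Set.Ioi 0)) (nhds (α * ∑ l, k l)) := by
    refine (hslope.mono_left hmono).congr' ?_
    filter_upwards [self_mem_nhdsWithin] with ε hε
    rw [slope_def_field]
    simp [hdetB]
  have hquot : Filter.Tendsto (fun ε : ℝ => ε / (B + ε • D).det)
      (nhdsWithin 0 (Set.Ioi 0)) (nhds (α * ∑ l, k l)⁻¹) := by
    refine (hratio.inv₀ hc1ne).congr fun ε => ?_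
    rw [inv_div]
  have hcontM : Continuous fun ε : ℝ => B + ε • D :=
    continuous_const.add (continuous_id.smul continuous_const)
  have hadj : Filter.Tendsto (fun ε : ℝ => (B + ε • D).adjugate)
      (nhdsWithin 0 (Set.Ioi 0)) (nhds B.adjugate) := by
    have h0 : Filter.Tendsto (fun ε : ℝ => (B + ε • D).adjugate) (nhds 0)
        (nhds B.adjugate) := by
      have := hcontM.matrix_adjugate.tendsto 0
      simpa using this
    exact h0.mono_left nhdsWithin_le_nhds
  have hsmul := hquot.smul hadj
  have hmain : Filter.Tendsto (fun ε : ℝ => ε • (B + ε • D)⁻¹)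
      (nhdsWithin 0 (Set.Ioi 0)) (nhds ((α * ∑ l, k l)⁻¹ • B.adjugate)) := by
    refine hsmul.congr' ?_
    filter_upwards [self_mem_nhdsWithin] with ε hε
    rw [Matrix.inv_def, Ring.inverse_eq_inv, smul_smul, ← div_eq_mul_inv]
  have hcont21 : Continuous fun X : Matrix (Fin n ⊕ Fin m) (Fin n ⊕ Fin m) ℝ =>
      X.toBlocks₂₁ := continuous_id.matrix_submatrix Sum.inr Sum.inl
  have hφ : Filter.Tendsto
      (fun ε : ℝ => -(K * (ε • (B + ε • D)⁻¹).toBlocks₂₁))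
      (nhdsWithin 0 (Set.Ioi 0))
      (nhds (-(K * ((α * ∑ l, k l)⁻¹ • B.adjugate).toBlocks₂₁))) := by
    have hc : Continuous fun X : Matrix (Fin n ⊕ Fin m) (Fin n ⊕ Fin m) ℝ =>
        -(K * X.toBlocks₂₁) := (continuous_const.matrix_mul hcont21).neg
    exact (hc.tendsto _).comp hmain
  have hlim_eq : -(K * ((α * ∑ l, k l)⁻¹ • B.adjugate).toBlocks₂₁)
      = (Matrix.of fun (i : Fin m) (_ : Fin n) => -k i / ∑ l, k l) := by
    ext i j
    have hadj21 : ((α * ∑ l, k l)⁻¹ • B.adjugate).toBlocks₂₁ i j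
        = (α * ∑ l, k l)⁻¹ * α := by
      simp [Matrix.toBlocks₂₁, hαeq]
    rw [Matrix.neg_apply, hK, Matrix.diagonal_mul, hadj21, Matrix.of_apply,
      div_eq_mul_inv, neg_mul, mul_inv, mul_comm α⁻¹ (∑ l, k l)⁻¹, mul_assoc,
      inv_mul_cancel₀ hα0, mul_one]
  rw [← hlim_eq]
  refine hφ.congr' ?_
  filter_upwards [self_mem_nhdsWithin] with ε hε
  have hε' : (0:ℝ) < ε := hε
  letI i1 := Matrix.invertibleOfIsUnitDet _ (h22 ε hε')
  have hinvOf : ⅟(B.toBlocks₂₂ + ε • K) = (B.toBlocks₂₂ + ε • K)⁻¹ :=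
    Matrix.invOf_eq_nonsing_inv _
  letI i2 : Invertible (B.toBlocks₁₁ - B.toBlocks₁₂ * ⅟(B.toBlocks₂₂ + ε • K) *
      B.toBlocks₂₁) := by
    rw [hinvOf]
    exact Matrix.invertibleOfIsUnitDet _ (hSchur ε hε')
  letI i3 : Invertible (fromBlocks B.toBlocks₁₁ B.toBlocks₁₂ B.toBlocks₂₁
      (B.toBlocks₂₂ + ε • K)) :=
    Matrix.fromBlocks₂₂Invertible _ _ _ _
  have hM21 : (B + ε • D)⁻¹.toBlocks₂₁
      = -((B.toBlocks₂₂ + ε • K)⁻¹ * B.toBlocks₂₁ * (B.toBlocks₁₁ - B.toBlocks₁₂ *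
          (B.toBlocks₂₂ + ε • K)⁻¹ * B.toBlocks₂₁)⁻¹) := by
    rw [hMblocks ε, ← Matrix.invOf_eq_nonsing_inv, Matrix.invOf_fromBlocks₂₂_eq,
      Matrix.toBlocks_fromBlocks₂₁]
    simp only [Matrix.invOf_eq_nonsing_inv]
  have hsmul21 : (ε • (B + ε • D)⁻¹).toBlocks₂₁ = ε • ((B + ε • D)⁻¹.toBlocks₂₁) := by
    ext i j
    simp [Matrix.toBlocks₂₁]
  rw [hsmul21, hM21]
  simp only [smul_neg, Matrix.mul_neg, neg_neg, Matrix.mul_smul, Matrix.smul_mul,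
    Matrix.mul_assoc]
end

section
/- (Laurent-series leading term of the reduced susceptance inverse) Let B be the susceptance matrix of a connected weighted graph partitioned into loads and inverters, and K_I diagonal with strictly negative entries K_1,…,K_m. For ε > 0 the matrix B_{red,ε} := B_LL − B_LI(B_II + εK_I)^{−1}B_IL is negative definite (hence invertible), and ε·B_{red,ε}^{−1} converges to (∑_{i=1}^m K_i)^{−1}·1_{n×n} as ε → 0⁺, where 1_{n×n} is the n×n all-ones matrix. -/
set_option linter.unusedSectionVars false
set_option maxHeartbeats 1000000
open Matrix Filter

namespace SuscAux

variable {V : Type*} [Fintype V] [DecidableEq V]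

lemma rowSum_zero {M : Matrix V V ℝ}
    (hd : ∀ i, M i i = -∑ j ∈ Finset.univ.erase i, M i j) (i : V) :
    ∑ j, M i j = 0 := by
  rw [← Finset.add_sum_erase Finset.univ _ (Finset.mem_univ i), hd i, neg_add_cancel]

lemma quad_eq {M : Matrix V V ℝ} (hsym : M.IsSymm) (hrow : ∀ i, ∑ j, M i j = 0) (x : V → ℝ) :
    x ⬝ᵥ ((-M) *ᵥ x) = (1/2) * ∑ i, ∑ j, M i j * (x i - x j)^2 := by
  have hcol : ∀ j, ∑ i, M i j = 0 := by
    intro j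
    calc ∑ i, M i j = ∑ i, M j i := Finset.sum_congr rfl fun i _ => (hsym.apply j i)
    _ = 0 := hrow j
  have key : ∑ i, ∑ j, M i j * (x i - x j)^2
      = - 2 * ∑ i, ∑ j, x i * (M i j * x j) := by
    have h1 : ∀ i j, M i j * (x i - x j)^2
        = M i j * x i^2 + M i j * x j^2 - 2*(x i * (M i j * x j)) := by intro i j; ring
    calc ∑ i, ∑ j, M i j * (x i - x j)^2
        = ∑ i, ∑ j, (M i j * x i^2 + M i j * x j^2 - 2*(x i * (M i j * x j))) :=
          Finset.sum_congr rfl fun i _ => Finset.sum_congr rfl fun j _ => h1 i j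
      _ = ((∑ i, ∑ j, M i j * x i^2) + (∑ i, ∑ j, M i j * x j^2))
            - ∑ i, ∑ j, 2*(x i * (M i j * x j)) := by
          simp [Finset.sum_add_distrib, Finset.sum_sub_distrib]
      _ = - 2 * ∑ i, ∑ j, x i * (M i j * x j) := by
          have e1 : ∀ i : V, ∑ j, M i j * x i ^ 2 = 0 := fun i => by
            rw [← Finset.sum_mul, hrow i, zero_mul]
          have e2 : ∑ i, ∑ j, M i j * x j ^ 2 = 0 := by
            rw [Finset.sum_comm]
            refine Finset.sum_eq_zero fun j _ => ?_
            rw [← Finset.sum_mul, hcol j, zero_mul]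
          rw [Finset.sum_eq_zero (fun i _ => e1 i), e2]
          have e3 : ∑ i : V, ∑ j : V, 2*(x i * (M i j * x j))
              = 2 * ∑ i : V, ∑ j : V, x i * (M i j * x j) := by
            rw [Finset.mul_sum]
            exact Finset.sum_congr rfl fun i _ => (Finset.mul_sum _ _ _).symm
          rw [e3]; ring
  have lhs : x ⬝ᵥ ((-M) *ᵥ x) = -∑ i, ∑ j, x i * (M i j * x j) := by
    simp only [dotProduct, mulVec, Matrix.neg_apply, neg_mul, mul_neg, Finset.sum_neg_distrib,
      Finset.mul_sum, mul_assoc]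
  rw [lhs, key]; ring

omit [Fintype V] [DecidableEq V] in
lemma quad_term_nonneg {M : Matrix V V ℝ} (hpos : ∀ i j, i ≠ j → 0 ≤ M i j) (x : V → ℝ)
    (i j : V) : 0 ≤ M i j * (x i - x j)^2 := by
  rcases eq_or_ne i j with rfl | h
  · simp
  · exact mul_nonneg (hpos i j h) (sq_nonneg _)

lemma quad_nonneg {M : Matrix V V ℝ} (hsym : M.IsSymm) (hrow : ∀ i, ∑ j, M i j = 0)
    (hpos : ∀ i j, i ≠ j → 0 ≤ M i j) (x : V → ℝ) :
    0 ≤ x ⬝ᵥ ((-M) *ᵥ x) := by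
  rw [quad_eq hsym hrow]
  have : (0:ℝ) ≤ ∑ i, ∑ j, M i j * (x i - x j)^2 :=
    Finset.sum_nonneg fun i _ => Finset.sum_nonneg fun j _ => quad_term_nonneg hpos x i j
  linarith

lemma const_of_quad_zero {M : Matrix V V ℝ} (hsym : M.IsSymm) (hrow : ∀ i, ∑ j, M i j = 0)
    (hpos : ∀ i j, i ≠ j → 0 ≤ M i j) (hconn : (suscGraph M).Connected) (x : V → ℝ)
    (hq : x ⬝ᵥ ((-M) *ᵥ x) = 0) : ∀ i j, x i = x j := by
  rw [quad_eq hsym hrow] at hq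
  have h2 : ∑ i, ∑ j, M i j * (x i - x j)^2 = 0 := by linarith
  have h3 := (Finset.sum_eq_zero_iff_of_nonneg
      (fun i _ => Finset.sum_nonneg fun j _ => quad_term_nonneg hpos x i j)).mp h2
  have hterm : ∀ i j, M i j * (x i - x j)^2 = 0 := fun i j =>
    (Finset.sum_eq_zero_iff_of_nonneg
      (fun j _ => quad_term_nonneg hpos x i j)).mp (h3 i (Finset.mem_univ i)) j (Finset.mem_univ j)
  have hadj : ∀ i j, (suscGraph M).Adj i j → x i = x j := by
    intro i j hij
    obtain ⟨hne, hp, -⟩ : i ≠ j ∧ 0 < M i j ∧ 0 < M j i := hij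
    rcases mul_eq_zero.mp (hterm i j) with h | h
    · exact absurd h (ne_of_gt hp)
    · have := pow_eq_zero_iff (n := 2) (by norm_num) |>.mp h
      linarith [sub_eq_zero.mp this]
  have hwalk : ∀ {a b : V} (_ : (suscGraph M).Walk a b), x a = x b := by
    intro a b w
    induction w with
    | nil => rfl
    | cons h _ ih => exact (hadj _ _ h).trans ih
  exact fun i j => hwalk ((hconn.preconnected i j).some)

lemma tendsto_inv {ι : Type*} {l : Filter ι} {f : ι → Matrix V V ℝ} {M : Matrix V V ℝ}
    (hf : Filter.Tendsto f l (nhds M)) (hM : M.det ≠ 0) :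
    Filter.Tendsto (fun x => (f x)⁻¹) l (nhds M⁻¹) := by
  have hdet : Filter.Tendsto (fun x => (f x).det) l (nhds M.det) :=
    ((continuous_id.matrix_det).tendsto M).comp hf
  have hadj : Filter.Tendsto (fun x => (f x).adjugate) l (nhds M.adjugate) :=
    ((continuous_id.matrix_adjugate).tendsto M).comp hf
  have h1 : Filter.Tendsto (fun x => ((f x).det)⁻¹ • (f x).adjugate) l
      (nhds (M.det⁻¹ • M.adjugate)) := (hdet.inv₀ hM).smul hadj
  simpa only [Matrix.inv_def, Ring.inverse_eq_inv'] using h1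

end SuscAux


/-- Laurent-series leading term of the reduced susceptance inverse:
for `ε > 0` the matrix `B_{red,ε} = B_LL - B_LI (B_II + ε K_I)⁻¹ B_IL` is negative
definite (hence invertible), and `ε B_{red,ε}⁻¹ → (Σ_i K_i)⁻¹ 1_{n×n}` as
`ε → 0⁺`. -/
theorem reduced_susceptance_laurent_leading_term {n m : ℕ} (hn : 0 < n) (hm : 0 < m)
    (B : Matrix (Fin n ⊕ Fin m) (Fin n ⊕ Fin m) ℝ) (hB : IsSusceptance B)
    (k : Fin m → ℝ) (hk : ∀ i, k i < 0) :
    (∀ ε : ℝ, 0 < ε →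
      (-(B.toBlocks₁₁ -
        B.toBlocks₁₂ * (B.toBlocks₂₂ + ε • Matrix.diagonal k)⁻¹ *
          B.toBlocks₂₁)).PosDef) ∧
    Filter.Tendsto
      (fun ε : ℝ => ε •
        (B.toBlocks₁₁ -
          B.toBlocks₁₂ * (B.toBlocks₂₂ + ε • Matrix.diagonal k)⁻¹ *
            B.toBlocks₂₁)⁻¹)
      (nhdsWithin 0 (Set.Ioi 0))
      (nhds ((∑ i, k i)⁻¹ • Matrix.of fun (_ : Fin n) (_ : Fin n) => (1 : ℝ))) := by
  classical
  obtain ⟨hsym, hpos, hdiag, hconn⟩ := hB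
  have hrow : ∀ i, ∑ j, B i j = 0 := fun i => SuscAux.rowSum_zero hdiag i
  set A := B.toBlocks₁₁ with hA
  set C := B.toBlocks₁₂ with hC
  set Ct := B.toBlocks₂₁ with hCt
  set D := B.toBlocks₂₂ with hD
  set Kd : Matrix (Fin m) (Fin m) ℝ := Matrix.diagonal k with hKd
  have hCtC : Ct = Cᵀ := by
    ext i j
    exact hsym.apply (Sum.inl j) (Sum.inr i)
  have hDsymm : Dᵀ = D := by
    ext i j
    exact hsym.apply (Sum.inr i) (Sum.inr j)
  have hAsymm : Aᵀ = A := by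
    ext i j
    exact hsym.apply (Sum.inl i) (Sum.inl j)
  -- the all-ones vectors
  set u : Fin n → ℝ := fun _ => 1 with hu
  set um : Fin m → ℝ := fun _ => 1 with hum
  have hnR : (n:ℝ) ≠ 0 := Nat.cast_ne_zero.mpr hn.ne'
  have : Nonempty (Fin m) := ⟨⟨0, hm⟩⟩
  have : Nonempty (Fin n) := ⟨⟨0, hn⟩⟩
  have hksum : ∑ i, k i < 0 := by
    have := Finset.sum_lt_sum_of_nonempty (Finset.univ_nonempty (α := Fin m))
      (f := k) (g := fun _ => (0:ℝ)) (fun i _ => hk i)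
    simpa using this
  -- block row sums
  have hAu : A *ᵥ u + C *ᵥ um = 0 := by
    funext i
    have := hrow (Sum.inl i)
    rw [Fintype.sum_sum_type] at this
    simpa [mulVec, dotProduct, hu, hum, hA, hC, toBlocks₁₁, toBlocks₁₂] using this
  have hCtu : Ct *ᵥ u + D *ᵥ um = 0 := by
    funext i
    have := hrow (Sum.inr i)
    rw [Fintype.sum_sum_type] at this
    simpa [mulVec, dotProduct, hu, hum, hCt, hD, toBlocks₂₁, toBlocks₂₂] using this
  -- the perturbation block matrix
  have hNeq : ∀ ε : ℝ, fromBlocks (-A) (-C) ((-C)ᴴ) (-(D + ε • Kd))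
      = -(B + fromBlocks 0 0 0 (ε • Kd)) := by
    intro ε
    have h1 : (-C)ᴴ = -Ct := by
      rw [conjTranspose_eq_transpose_of_trivial, transpose_neg, hCtC]
    rw [h1]
    ext (i|i) (j|j) <;>
      simp [hA, hC, hCt, hD, toBlocks₁₁, toBlocks₁₂, toBlocks₂₁, toBlocks₂₂]
  -- quadratic form facts
  have hBneg : ∀ z : (Fin n ⊕ Fin m) → ℝ, 0 ≤ z ⬝ᵥ ((-B) *ᵥ z) :=
    SuscAux.quad_nonneg hsym hrow hpos
  have hBconst : ∀ z, z ⬝ᵥ ((-B) *ᵥ z) = 0 → ∀ p q, z p = z q :=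
    fun z hz => SuscAux.const_of_quad_zero hsym hrow hpos hconn z hz
  have hEquad : ∀ (ε : ℝ) (z : (Fin n ⊕ Fin m) → ℝ),
      z ⬝ᵥ ((-(B + fromBlocks 0 0 0 (ε • Kd))) *ᵥ z)
        = z ⬝ᵥ ((-B) *ᵥ z) + ε * ∑ i, (-(k i)) * (z (Sum.inr i))^2 := by
    intro ε z
    have hsplit : (-(B + fromBlocks 0 0 0 (ε • Kd))) *ᵥ z
        = (-B) *ᵥ z + (-(fromBlocks 0 0 0 (ε • Kd) : Matrix _ _ ℝ)) *ᵥ z := by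
      rw [← add_mulVec, neg_add]
    rw [hsplit, dotProduct_add]
    congr 1
    have hEz : ((fromBlocks 0 0 0 (ε • Kd) : Matrix _ _ ℝ) *ᵥ z)
        = (Sum.elim (fun _ => (0:ℝ)) (fun i => ε * k i * z (Sum.inr i)) : (Fin n ⊕ Fin m) → ℝ) := by
      funext p
      rcases p with p | p <;>
        simp [mulVec, dotProduct, Fintype.sum_sum_type, hKd, diagonal_apply,
          Finset.mul_sum, mul_assoc]
    rw [neg_mulVec, dotProduct_neg, hEz]
    rw [dotProduct, Fintype.sum_sum_type]
    simp only [Sum.elim_inl, Sum.elim_inr, mul_zero, Finset.sum_const_zero, zero_add]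
    rw [Finset.mul_sum, ← Finset.sum_neg_distrib]
    exact Finset.sum_congr rfl fun i _ => by ring
  have hBherm : B.IsHermitian := by
    show _ = _
    rw [conjTranspose_eq_transpose_of_trivial, hsym.eq]
  have hEherm : ∀ ε : ℝ,
      (fromBlocks (0 : Matrix (Fin n) (Fin n) ℝ) 0 0 (ε • Kd)).IsHermitian := by
    intro ε
    show _ = _
    rw [fromBlocks_conjTranspose]
    congr 1 <;> simp [hKd]
  have hNherm : ∀ ε : ℝ, (-(B + fromBlocks 0 0 0 (ε • Kd))).IsHermitian :=
    fun ε => (hBherm.add (hEherm ε)).neg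
  have hkpos : ∀ (ε : ℝ), 0 ≤ ε → ∀ z : (Fin n ⊕ Fin m) → ℝ,
      0 ≤ ε * ∑ i, (-(k i)) * (z (Sum.inr i))^2 := fun ε hε z =>
    mul_nonneg hε (Finset.sum_nonneg fun i _ =>
      mul_nonneg (by linarith [hk i]) (sq_nonneg _))
  have hNpd : ∀ ε : ℝ, 0 < ε → (-(B + fromBlocks 0 0 0 (ε • Kd))).PosDef := by
    intro ε hε
    refine posDef_iff_dotProduct_mulVec.mpr ⟨hNherm ε, fun z hz => ?_⟩
    simp only [star_trivial]
    rw [hEquad ε z]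
    have h1 := hBneg z
    have h2 := hkpos ε hε.le z
    rcases (add_nonneg h1 h2).lt_or_eq with h | h
    · exact h
    · exfalso
      have hq0 : z ⬝ᵥ ((-B) *ᵥ z) = 0 := by linarith
      have hs0 : ε * ∑ i, (-(k i)) * (z (Sum.inr i))^2 = 0 := by linarith
      have hzc := hBconst z hq0
      have hsum0 : ∑ i, (-(k i)) * (z (Sum.inr i))^2 = 0 :=
        (mul_eq_zero.mp hs0).resolve_left hε.ne'
      have hzr : ∀ i, z (Sum.inr i) = 0 := by
        intro i
        have h4 := (Finset.sum_eq_zero_iff_of_nonneg (fun i _ =>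
          mul_nonneg (by linarith [hk i]) (sq_nonneg _))).mp hsum0 i (Finset.mem_univ i)
        have hki : -(k i) ≠ 0 := by linarith [hk i]
        have h5 := (mul_eq_zero.mp h4).resolve_left hki
        exact pow_eq_zero_iff (two_ne_zero) |>.mp h5
      exact hz (funext fun p => (hzc p (Sum.inr ⟨0, hm⟩)).trans (hzr _))
  have hDquad : ∀ (ε : ℝ) (x : Fin m → ℝ),
      x ⬝ᵥ ((-(D + ε • Kd)) *ᵥ x)
        = (Sum.elim (0 : Fin n → ℝ) x) ⬝ᵥ
            ((-(B + fromBlocks 0 0 0 (ε • Kd))) *ᵥ (Sum.elim (0 : Fin n → ℝ) x)) := by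
    intro ε x
    rw [← hNeq ε, fromBlocks_mulVec]
    simp [sumElim_dotProduct_sumElim]
  have hDpd : ∀ ε : ℝ, 0 ≤ ε → (-(D + ε • Kd)).PosDef := by
    intro ε hε
    have herm : (-(D + ε • Kd)).IsHermitian := by
      show _ = _
      rw [conjTranspose_eq_transpose_of_trivial, transpose_neg, transpose_add, hDsymm]
      simp [hKd]
    refine posDef_iff_dotProduct_mulVec.mpr ⟨herm, fun x hx => ?_⟩
    simp only [star_trivial]
    rw [hDquad ε x, hEquad]
    set z := Sum.elim (0 : Fin n → ℝ) x with hz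
    have h1 := hBneg z
    have h2 := hkpos ε hε z
    rcases (add_nonneg h1 h2).lt_or_eq with h | h
    · exact h
    · exfalso
      have hq0 : z ⬝ᵥ ((-B) *ᵥ z) = 0 := by linarith
      have hzc := hBconst z hq0
      apply hx
      funext i
      calc x i = z (Sum.inr i) := rfl
      _ = z (Sum.inl ⟨0, hn⟩) := hzc _ _
      _ = 0 := rfl
  have hDunit : ∀ ε : ℝ, 0 ≤ ε → IsUnit (D + ε • Kd).det := by
    intro ε hε
    have h := (hDpd ε hε).det_pos
    rw [det_neg] at h
    refine isUnit_iff_ne_zero.mpr fun h0 => ?_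
    rw [h0, mul_zero] at h
    exact lt_irrefl _ h

  -- part 1: Schur complements are positive definite
  have hinvneg : ∀ ε : ℝ, 0 ≤ ε → (-(D + ε • Kd))⁻¹ = -(D + ε • Kd)⁻¹ := by
    intro ε hε
    apply inv_eq_right_inv
    rw [Matrix.neg_mul, Matrix.mul_neg, neg_neg, mul_nonsing_inv _ (hDunit ε hε)]
  have hEq : ∀ ε : ℝ, 0 ≤ ε →
      (-A) - (-C) * (-(D + ε • Kd))⁻¹ * (-C)ᴴ = -(A - C * (D + ε • Kd)⁻¹ * Ct) := by
    intro ε hε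
    rw [hinvneg ε hε, conjTranspose_eq_transpose_of_trivial, transpose_neg, ← hCtC]
    simp only [Matrix.neg_mul, Matrix.mul_neg, neg_neg]
    abel
  have hpart1 : ∀ ε : ℝ, 0 < ε → (-(A - C * (D + ε • Kd)⁻¹ * Ct)).PosDef := by
    intro ε hε
    have hDu := hDunit ε hε.le
    haveI : Invertible (D + ε • Kd) := (D + ε • Kd).invertibleOfIsUnitDet hDu
    haveI : Invertible (-(D + ε • Kd)) :=
      (-(D + ε • Kd)).invertibleOfIsUnitDet (isUnit_iff_ne_zero.mpr (hDpd ε hε.le).det_pos.ne')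
    have hDherm : (-(D + ε • Kd)).IsHermitian := (hDpd ε hε.le).1
    have hHerm : (-(A - C * (D + ε • Kd)⁻¹ * Ct)).IsHermitian := by
      rw [← hEq ε hε.le]
      exact (IsHermitian.fromBlocks₂₂ (-A) (-C) hDherm).mp (by rw [hNeq]; exact hNherm ε)
    refine posDef_iff_dotProduct_mulVec.mpr ⟨hHerm, fun x hx => ?_⟩
    set y : Fin m → ℝ := -(((-(D + ε • Kd))⁻¹ * (-C)ᴴ) *ᵥ x) with hy
    have hident := schur_complement_eq₂₂ (-A) (-C) x y hDherm
    rw [hNeq ε] at hident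
    have h0 : ((-(D + ε • Kd))⁻¹ * (-C)ᴴ) *ᵥ x + y = 0 := by
      rw [hy]; exact add_neg_cancel _
    rw [h0] at hident
    simp only [star_trivial, star_zero, zero_vecMul, zero_dotProduct, zero_add] at hident
    have hz : (Sum.elim x y) ≠ 0 := fun h =>
      hx (funext fun i => by simpa using congrFun h (Sum.inl i))
    have hposz := (posDef_iff_dotProduct_mulVec.mp (hNpd ε hε)).2 hz
    simp only [star_trivial] at hposz
    rw [dotProduct_mulVec] at hposz
    rw [hident, hEq ε hε.le] at hposz
    simpa only [star_trivial, dotProduct_mulVec] using hposz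

  -- kernel identities
  have hKdu : Kd *ᵥ um = k := by
    funext i
    simp [hKd, mulVec_diagonal, hum]
  have hCtu' : Ct *ᵥ u = -(D *ᵥ um) := eq_neg_of_add_eq_zero_left hCtu
  have hSu : ∀ ε : ℝ, 0 ≤ ε →
      (A - C * (D + ε • Kd)⁻¹ * Ct) *ᵥ u = (-ε) • ((C * (D + ε • Kd)⁻¹) *ᵥ k) := by
    intro ε hε
    have hDu := hDunit ε hε
    have hDinv : (D + ε • Kd)⁻¹ *ᵥ (Ct *ᵥ u) = -um + ε • ((D + ε • Kd)⁻¹ *ᵥ k) := by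
      rw [hCtu']
      have hDdecomp : D *ᵥ um = (D + ε • Kd) *ᵥ um - ε • (Kd *ᵥ um) := by
        rw [add_mulVec, smul_mulVec]
        abel
      rw [hDdecomp, hKdu, mulVec_neg, mulVec_sub, mulVec_smul, mulVec_mulVec,
        nonsing_inv_mul _ hDu, one_mulVec]
      abel
    have hstep : (A - C * (D + ε • Kd)⁻¹ * Ct) *ᵥ u
        = A *ᵥ u - C *ᵥ ((D + ε • Kd)⁻¹ *ᵥ (Ct *ᵥ u)) := by
      rw [sub_mulVec, mulVec_mulVec, mulVec_mulVec]
    rw [hstep, hDinv, mulVec_add, mulVec_neg, mulVec_smul, mulVec_mulVec]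
    have harr : A *ᵥ u - (-(C *ᵥ um) + ε • ((C * (D + ε • Kd)⁻¹) *ᵥ k))
        = (A *ᵥ u + C *ᵥ um) - ε • ((C * (D + ε • Kd)⁻¹) *ᵥ k) := by abel
    rw [harr, hAu, zero_sub, neg_smul]
  have h0K : D + (0:ℝ) • Kd = D := by simp
  haveI hD0inv : Invertible D := D.invertibleOfIsUnitDet (by simpa [h0K] using hDunit 0 le_rfl)
  have hDunit0 : IsUnit D.det := by simpa [h0K] using hDunit 0 le_rfl
  have hS0u : (A - C * D⁻¹ * Ct) *ᵥ u = 0 := by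
    have h := hSu 0 le_rfl
    rw [h0K] at h
    simpa using h
  have hS0symm : (A - C * D⁻¹ * Ct)ᵀ = A - C * D⁻¹ * Ct := by
    rw [transpose_sub, hAsymm, transpose_mul, transpose_mul, transpose_nonsing_inv, hDsymm,
      hCtC, transpose_transpose, ← Matrix.mul_assoc]
  -- Schur quadratic form at ε = 0
  have hSchur0 : ∀ x : Fin n → ℝ, ∃ z : (Fin n ⊕ Fin m) → ℝ, (∀ i, z (Sum.inl i) = x i) ∧
      x ⬝ᵥ ((-(A - C * D⁻¹ * Ct)) *ᵥ x) = z ⬝ᵥ ((-B) *ᵥ z) := by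
    intro x
    have hDherm : (-D).IsHermitian := by
      have h := (hDpd 0 le_rfl).1
      rwa [h0K] at h
    haveI : Invertible (-D) :=
      (-D).invertibleOfIsUnitDet (isUnit_iff_ne_zero.mpr
        (by simpa [h0K] using (hDpd 0 le_rfl).det_pos.ne'))
    set y : Fin m → ℝ := -(((-D)⁻¹ * (-C)ᴴ) *ᵥ x) with hy
    refine ⟨Sum.elim x y, fun i => rfl, ?_⟩
    have hident := schur_complement_eq₂₂ (-A) (-C) x y hDherm
    have hN0 : fromBlocks (-A) (-C) ((-C)ᴴ) (-D) = -B := by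
      have h := hNeq 0
      rw [h0K] at h
      simpa using h
    rw [hN0] at hident
    have h0 : ((-D)⁻¹ * (-C)ᴴ) *ᵥ x + y = 0 := by
      rw [hy]; exact add_neg_cancel _
    rw [h0] at hident
    simp only [star_trivial, star_zero, zero_vecMul, zero_dotProduct, zero_add] at hident
    have hEq0 : (-A) - (-C) * (-D)⁻¹ * (-C)ᴴ = -(A - C * D⁻¹ * Ct) := by
      have h := hEq 0 le_rfl
      rwa [h0K] at h
    rw [hEq0] at hident
    rw [dotProduct_mulVec, ← hident, ← dotProduct_mulVec]

  -- the all-ones matrix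
  set J : Matrix (Fin n) (Fin n) ℝ := Matrix.of (fun _ _ => (1:ℝ)) with hJ
  have hJu : J *ᵥ u = (n:ℝ) • u := by
    funext i
    simp [hJ, mulVec, dotProduct, hu]
  have hJquad : ∀ x : Fin n → ℝ, x ⬝ᵥ (J *ᵥ x) = (∑ i, x i)^2 := by
    intro x
    simp only [hJ, mulVec, dotProduct, Matrix.of_apply, one_mul, mul_one]
    rw [← Finset.sum_mul, sq]
  have hJsymm : Jᵀ = J := by
    ext i j
    simp [hJ]
  set V : Matrix (Fin n) (Fin n) ℝ := (-(A - C * D⁻¹ * Ct)) + J with hV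
  have hVsymm : Vᵀ = V := by
    rw [hV, transpose_add, transpose_neg, hS0symm, hJsymm]
  have hVpd : V.PosDef := by
    rw [posDef_iff_dotProduct_mulVec]
    constructor
    · show _ = _
      rw [conjTranspose_eq_transpose_of_trivial, hVsymm]
    · intro x hx
      simp only [star_trivial]
      rw [hV, add_mulVec, dotProduct_add, hJquad]
      obtain ⟨z, hzl, hzq⟩ := hSchur0 x
      rw [hzq]
      have h1 := hBneg z
      have h2 : (0:ℝ) ≤ (∑ i, x i)^2 := sq_nonneg _
      rcases (add_nonneg h1 h2).lt_or_eq with h | h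
      · exact h
      · exfalso
        have hq0 : z ⬝ᵥ ((-B) *ᵥ z) = 0 := by linarith [sq_nonneg (∑ i, x i)]
        have hsq : (∑ i, x i)^2 = 0 := by linarith
        have hsum : ∑ i, x i = 0 := pow_eq_zero_iff (two_ne_zero) |>.mp hsq
        have hc := hBconst z hq0
        have hxc : ∀ i, x i = x ⟨0, hn⟩ := fun i => by
          rw [← hzl i, ← hzl ⟨0, hn⟩]; exact hc _ _
        have hsx : ∑ i, x i = (n:ℝ) * x ⟨0, hn⟩ := by
          rw [Finset.sum_congr rfl fun i _ => hxc i]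
          simp [Finset.sum_const, Finset.card_univ, mul_comm]
        have hx0 : x ⟨0, hn⟩ = 0 := by
          rw [hsx] at hsum
          exact (mul_eq_zero.mp hsum).resolve_left hnR
        exact hx (funext fun i => (hxc i).trans hx0)
  have hVunit : IsUnit V.det := isUnit_iff_ne_zero.mpr hVpd.det_pos.ne'
  have hVu : V *ᵥ u = (n:ℝ) • u := by
    rw [hV, add_mulVec, hJu, neg_mulVec, hS0u]
    simp
  have hVinvu : V⁻¹ *ᵥ u = (n:ℝ)⁻¹ • u := by
    have h1 : V⁻¹ *ᵥ (V *ᵥ u) = u := by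
      rw [mulVec_mulVec, nonsing_inv_mul _ hVunit, one_mulVec]
    rw [hVu, mulVec_smul] at h1
    calc V⁻¹ *ᵥ u = (n:ℝ)⁻¹ • ((n:ℝ) • (V⁻¹ *ᵥ u)) := by
          rw [smul_smul, inv_mul_cancel₀ hnR, one_smul]
    _ = (n:ℝ)⁻¹ • u := by rw [h1]
  have hVinvsymm : (V⁻¹)ᵀ = V⁻¹ := by
    rw [transpose_nonsing_inv, hVsymm]
  -- value of u ⬝ᵥ w0
  have hw0sum : u ⬝ᵥ ((C * D⁻¹) *ᵥ k) = -∑ i, k i := by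
    rw [dotProduct_mulVec]
    have h2 : u ᵥ* C = Ct *ᵥ u := by
      funext j
      simp [vecMul, mulVec, dotProduct, hu, hCtC]
    have h1 : u ᵥ* (C * D⁻¹) = -um := by
      rw [← vecMul_vecMul, h2, hCtu']
      have h3 : (D *ᵥ um) ᵥ* D⁻¹ = um := by
        rw [show D *ᵥ um = um ᵥ* D from by rw [← hDsymm, mulVec_transpose, hDsymm],
          vecMul_vecMul, mul_nonsing_inv _ hDunit0, vecMul_one]
      rw [Matrix.neg_vecMul, h3]
    rw [h1]
    simp [dotProduct, hum]

  -- continuity facts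
  have hDten : Tendsto (fun ε : ℝ => D + ε • Kd) (nhds 0) (nhds D) := by
    have hc : Continuous fun ε : ℝ => D + ε • Kd :=
      continuous_const.add (continuous_id.smul continuous_const)
    simpa using hc.tendsto 0
  have hDinvten : Tendsto (fun ε : ℝ => (D + ε • Kd)⁻¹) (nhds 0) (nhds D⁻¹) :=
    SuscAux.tendsto_inv hDten hDunit0.ne_zero
  set W : ℝ → Matrix (Fin n) (Fin n) ℝ := fun ε => (-(A - C * (D + ε • Kd)⁻¹ * Ct)) + J with hW
  have hWten : Tendsto W (nhds 0) (nhds V) := by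
    have hcont : Continuous fun M : Matrix (Fin m) (Fin m) ℝ => (-(A - C * M * Ct)) + J :=
      ((continuous_const.sub ((continuous_const.matrix_mul continuous_id).matrix_mul
        continuous_const)).neg).add continuous_const
    have h := (hcont.tendsto D⁻¹).comp hDinvten
    simpa [hW, hV, Function.comp_def] using h
  have hVdet : V.det ≠ 0 := hVpd.det_pos.ne'
  have hWinvten : Tendsto (fun ε => (W ε)⁻¹) (nhds 0) (nhds V⁻¹) :=
    SuscAux.tendsto_inv hWten hVdet
  set w : ℝ → (Fin n → ℝ) := fun ε => (C * (D + ε • Kd)⁻¹) *ᵥ k with hw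
  have hwten : Tendsto w (nhds 0) (nhds ((C * D⁻¹) *ᵥ k)) := by
    have hcont : Continuous fun M : Matrix (Fin m) (Fin m) ℝ => (C * M) *ᵥ k :=
      (continuous_const.matrix_mul continuous_id).matrix_mulVec continuous_const
    simpa [hw, Function.comp_def] using (hcont.tendsto D⁻¹).comp hDinvten
  set φ : ℝ → ℝ := fun ε => u ⬝ᵥ ((W ε)⁻¹ *ᵥ w ε) with hφ
  set φ₀ : ℝ := u ⬝ᵥ (V⁻¹ *ᵥ ((C * D⁻¹) *ᵥ k)) with hφ₀def
  have hφten : Tendsto φ (nhds 0) (nhds φ₀) := by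
    have hcont : Continuous fun p : Matrix (Fin n) (Fin n) ℝ × (Fin n → ℝ) =>
        u ⬝ᵥ (p.1 *ᵥ p.2) :=
      Continuous.dotProduct continuous_const
        (continuous_fst.matrix_mulVec continuous_snd)
    have h := (hcont.tendsto (V⁻¹, (C * D⁻¹) *ᵥ k)).comp (hWinvten.prodMk_nhds hwten)
    simpa [hφ, hφ₀def, Function.comp_def] using h
  have hφ0 : φ₀ = (n:ℝ)⁻¹ * (-∑ i, k i) := by
    rw [hφ₀def, dotProduct_mulVec]
    have h1 : u ᵥ* V⁻¹ = (n:ℝ)⁻¹ • u := by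
      rw [← mulVec_transpose, hVinvsymm, hVinvu]
    rw [h1, smul_dotProduct, hw0sum]
    simp
  have hφ0ne : φ₀ ≠ 0 := by
    rw [hφ0]
    have h1 : (0:ℝ) < -∑ i, k i := by linarith
    positivity
  -- structure of V⁻¹ * J * V⁻¹
  have hrowsum : ∀ i, ∑ a, V⁻¹ i a = (n:ℝ)⁻¹ := by
    intro i
    have h := congrFun hVinvu i
    simpa [mulVec, dotProduct, hu] using h
  have hcolsum : ∀ j, ∑ a, V⁻¹ a j = (n:ℝ)⁻¹ := by
    intro j
    calc ∑ a, V⁻¹ a j = ∑ a, V⁻¹ j a :=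
      Finset.sum_congr rfl fun a _ => congrFun (congrFun hVinvsymm j) a
    _ = (n:ℝ)⁻¹ := hrowsum j
  have hVJV : V⁻¹ * J * V⁻¹ = ((n:ℝ)⁻¹ * (n:ℝ)⁻¹) • J := by
    ext i j
    calc (V⁻¹ * J * V⁻¹) i j = ∑ b, (∑ a, V⁻¹ i a) * V⁻¹ b j := by
          simp [mul_apply, hJ]
    _ = (n:ℝ)⁻¹ * ∑ b, V⁻¹ b j := by rw [hrowsum i, ← Finset.mul_sum]
    _ = (n:ℝ)⁻¹ * (n:ℝ)⁻¹ := by rw [hcolsum j]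
    _ = (((n:ℝ)⁻¹ * (n:ℝ)⁻¹) • J) i j := by simp [hJ]
  -- eventual explicit formula for the inverse
  have hφne : ∀ᶠ ε in nhdsWithin (0:ℝ) (Set.Ioi 0), φ ε ≠ 0 :=
    (hφten.mono_left nhdsWithin_le_nhds).eventually_ne hφ0ne
  have hev : ∀ᶠ ε in nhdsWithin (0:ℝ) (Set.Ioi 0),
      ε • (A - C * (D + ε • Kd)⁻¹ * Ct)⁻¹
        = -(ε • (W ε)⁻¹) - ((n:ℝ) / φ ε) • ((W ε)⁻¹ * J * (W ε)⁻¹) := by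
    filter_upwards [hφne, self_mem_nhdsWithin] with ε hφn hεmem
    have hε : (0:ℝ) < ε := hεmem
    have ht : ε / n * φ ε ≠ 0 := mul_ne_zero (div_ne_zero hε.ne' hnR) hφn
    set c : ℝ := (ε / n * φ ε)⁻¹ with hc
    have hct : c * (ε / n * φ ε) = 1 := inv_mul_cancel₀ ht
    have hJpsd : J.PosSemidef := by
      refine posSemidef_iff_dotProduct_mulVec.mpr ⟨?_, fun x => ?_⟩
      · show _ = _
        rw [conjTranspose_eq_transpose_of_trivial, hJsymm]
      · simp only [star_trivial]
        rw [hJquad]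
        positivity
    have hWpd : (W ε).PosDef := (hpart1 ε hε).add_posSemidef hJpsd
    have hWunit : IsUnit (W ε).det := isUnit_iff_ne_zero.mpr hWpd.det_pos.ne'
    have hWW : W ε * (W ε)⁻¹ = 1 := mul_nonsing_inv _ hWunit
    have hWWl : (W ε)⁻¹ * W ε = 1 := nonsing_inv_mul _ hWunit
    have hWu : W ε *ᵥ u = (n:ℝ) • u + ε • w ε := by
      show ((-(A - C * (D + ε • Kd)⁻¹ * Ct)) + J) *ᵥ u = _
      rw [add_mulVec, neg_mulVec, hSu ε hε.le, hJu, neg_smul, neg_neg]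
      abel
    have hWiu : (n:ℝ) • ((W ε)⁻¹ *ᵥ u) = u - ε • ((W ε)⁻¹ *ᵥ w ε) := by
      have h1 : (W ε)⁻¹ *ᵥ (W ε *ᵥ u) = u := by
        rw [mulVec_mulVec, hWWl, one_mulVec]
      rw [hWu, mulVec_add, mulVec_smul, mulVec_smul] at h1
      rw [eq_sub_iff_add_eq]
      exact h1
    have hσ : u ⬝ᵥ ((W ε)⁻¹ *ᵥ u) = 1 - ε / n * φ ε := by
      have h2 := congrArg (fun v => u ⬝ᵥ v) hWiu
      simp only [dotProduct_smul, dotProduct_sub, smul_eq_mul] at h2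
      have huu : u ⬝ᵥ u = (n:ℝ) := by simp [dotProduct, hu]
      rw [huu] at h2
      have hφval : u ⬝ᵥ ((W ε)⁻¹ *ᵥ w ε) = φ ε := rfl
      rw [hφval] at h2
      have h3 : u ⬝ᵥ ((W ε)⁻¹ *ᵥ u) = ((n:ℝ) - ε * φ ε) / n := by
        rw [eq_div_iff hnR]
        linarith
      rw [h3]
      field_simp
    have hJWJ : J * (W ε)⁻¹ * J = (u ⬝ᵥ ((W ε)⁻¹ *ᵥ u)) • J := by
      ext i j
      simp only [mul_apply, hJ, Matrix.of_apply, mul_one, one_mul, Matrix.smul_apply, smul_eq_mul,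
        dotProduct, mulVec, hu]
      rw [Finset.sum_comm]
    have hG : A - C * (D + ε • Kd)⁻¹ * Ct = J - W ε := by
      show _ = J - ((-(A - C * (D + ε • Kd)⁻¹ * Ct)) + J)
      abel
    have hkey : (A - C * (D + ε • Kd)⁻¹ * Ct) *
        (-(((W ε)⁻¹) + c • ((W ε)⁻¹ * J * (W ε)⁻¹))) = 1 := by
      rw [hG, Matrix.mul_neg, ← Matrix.neg_mul, neg_sub]
      rw [Matrix.sub_mul]
      have hWX : W ε * ((W ε)⁻¹ + c • ((W ε)⁻¹ * J * (W ε)⁻¹)) = 1 + c • (J * (W ε)⁻¹) := by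
        rw [Matrix.mul_add, hWW, mul_smul_comm]
        congr 1
        rw [← Matrix.mul_assoc, ← Matrix.mul_assoc, hWW, Matrix.one_mul]
      have hJX : J * ((W ε)⁻¹ + c • ((W ε)⁻¹ * J * (W ε)⁻¹))
          = J * (W ε)⁻¹ + (c * (1 - ε / n * φ ε)) • (J * (W ε)⁻¹) := by
        rw [Matrix.mul_add, mul_smul_comm]
        congr 1
        have hassoc : J * ((W ε)⁻¹ * J * (W ε)⁻¹) = J * (W ε)⁻¹ * J * (W ε)⁻¹ := by
          rw [Matrix.mul_assoc, Matrix.mul_assoc, Matrix.mul_assoc]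
        rw [hassoc, hJWJ, hσ, smul_mul_assoc, smul_smul]
      rw [hWX, hJX]
      have harr : (1 : Matrix (Fin n) (Fin n) ℝ) + c • (J * (W ε)⁻¹)
          - (J * (W ε)⁻¹ + (c * (1 - ε / n * φ ε)) • (J * (W ε)⁻¹))
          = 1 + (c - 1 - c * (1 - ε / n * φ ε)) • (J * (W ε)⁻¹) := by
        rw [sub_smul, sub_smul, one_smul]
        abel
      rw [harr]
      have hcoeff : c - 1 - c * (1 - ε / n * φ ε) = 0 := by
        have h6 : c - 1 - c * (1 - ε / n * φ ε) = c * (ε / n * φ ε) - 1 := by ring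
        rw [h6, hct, sub_self]
      rw [hcoeff, zero_smul, add_zero]
    have hinv : (A - C * (D + ε • Kd)⁻¹ * Ct)⁻¹
        = -(((W ε)⁻¹) + c • ((W ε)⁻¹ * J * (W ε)⁻¹)) := inv_eq_right_inv hkey
    rw [hinv, smul_neg, smul_add, smul_smul]
    have hεc : ε * c = (n:ℝ) / φ ε := by
      rw [hc]
      field_simp
    rw [hεc]
    abel
  -- the limit of the explicit formula
  have hlim : Tendsto (fun ε => -(ε • (W ε)⁻¹) - ((n:ℝ) / φ ε) • ((W ε)⁻¹ * J * (W ε)⁻¹))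
      (nhdsWithin 0 (Set.Ioi 0)) (nhds ((∑ i, k i)⁻¹ • J)) := by
    have hT1 : Tendsto (fun ε : ℝ => ε • (W ε)⁻¹) (nhds 0) (nhds ((0:ℝ) • V⁻¹)) :=
      tendsto_id.smul hWinvten
    have hT2 : Tendsto (fun ε : ℝ => (n:ℝ) / φ ε) (nhds 0) (nhds ((n:ℝ) / φ₀)) :=
      tendsto_const_nhds.div hφten hφ0ne
    have hcont : Continuous fun M : Matrix (Fin n) (Fin n) ℝ => M * J * M :=
      (continuous_id.matrix_mul continuous_const).matrix_mul continuous_id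
    have hT3 : Tendsto (fun ε => (W ε)⁻¹ * J * (W ε)⁻¹) (nhds 0) (nhds (V⁻¹ * J * V⁻¹)) := by
      simpa [Function.comp_def] using (hcont.tendsto V⁻¹).comp hWinvten
    have h := ((hT1.neg.sub (hT2.smul hT3)).mono_left
      (nhdsWithin_le_nhds : nhdsWithin (0:ℝ) (Set.Ioi 0) ≤ nhds 0))
    have hval : -((0:ℝ) • V⁻¹) - ((n:ℝ) / φ₀) • (V⁻¹ * J * V⁻¹) = (∑ i, k i)⁻¹ • J := by
      have hks : (∑ i, k i) ≠ 0 := hksum.ne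
      rw [hVJV, zero_smul, neg_zero, zero_sub, smul_smul, hφ0, ← neg_smul]
      congr 1
      field_simp
    rw [hval] at h
    exact h
  exact ⟨hpart1, Tendsto.congr' (hev.mono fun ε h => h.symm) hlim⟩
end
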